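/- Let n ≥ 1 and consider the alternating deck of 2n cards (position p red iff p is odd). Let w_0 be the alternating word, let O be the set of color words that are a riffle of the cut at p for some odd p with 1 ≤ p ≤ 2n-1, and let E be the set of color words that are a riffle of the cut at p for some even p with 0 ≤ p ≤ 2n. Then for every color word w ∈ {red, black}^{2n}, the number of words f : {1,…,2n} → {1,2} such that w(f) = w equals: 2^n + 2^{n-1} if w = w_0; 2^{n-1} if w ∈ O and w ≠ w_0; 2^n if w ∈ E and w ≠ w_0; and 0 if w ∉ O ∪ E. Equivalently, the 2-shuffle probability Q_2(w) is these counts divided by 2^{2n}. -/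

import Mathlib

def dOdd (x : ℕ) : Bool := decide (Odd x)

@[simp] lemma dOdd_zero : dOdd 0 = false := by simp [dOdd]

@[simp] lemma dOdd_succ (x : ℕ) : dOdd (x + 1) = !dOdd x := by
  simp only [dOdd]
  rw [← decide_not]
  exact decide_eq_decide.mpr (by rw [Nat.odd_add_one, Nat.not_odd_iff_even])

@[simp] lemma dOdd_add (a b : ℕ) : dOdd (a + b) = (dOdd a ^^ dOdd b) := by
  induction b with
  | zero => simp
  | succ b ih => rw [← Nat.add_assoc, dOdd_succ, dOdd_succ, ih, Bool.xor_not]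

lemma dOdd_sub {a b : ℕ} (h : b ≤ a) : dOdd (a - b) = (dOdd a ^^ dOdd b) := by
  have : a - b + b = a := Nat.sub_add_cancel h
  have h2 := dOdd_add (a - b) b
  rw [this] at h2
  rw [h2]
  cases dOdd b <;> simp

lemma dOdd_cond (b : Bool) (x : ℕ) : dOdd (cond b 1 0 + x) = (b ^^ dOdd x) := by
  cases b <;> simp [dOdd_add]

lemma dOdd_true_iff (x : ℕ) : dOdd x = true ↔ Odd x := by simp [dOdd]
lemma dOdd_false_iff (x : ℕ) : dOdd x = false ↔ Even x := by
  simp [dOdd, Nat.not_odd_iff_even]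

def below {N : ℕ} (g : Fin N → Bool) (j : ℕ) : ℕ :=
  ∑ k : Fin N, if (k : ℕ) < j ∧ g k = true then 1 else 0

@[simp] lemma below_zero {N : ℕ} (g : Fin N → Bool) : below g 0 = 0 := by
  simp [below]

lemma below_cons {N : ℕ} (b : Bool) (g : Fin N → Bool) (j : ℕ) :
    below (Fin.cons b g) (j + 1) = cond b 1 0 + below g j := by
  rw [below, Fin.sum_univ_succ]
  simp only [Fin.cons_zero, Fin.cons_succ, below]
  congr 1
  · cases b <;> simp
  · apply Finset.sum_congr rfl
    intro k _
    congr 1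
    simp [Fin.val_succ, Nat.succ_lt_succ_iff]

lemma below_le {N : ℕ} (g : Fin N → Bool) (j : ℕ) : below g j ≤ N := by
  calc below g j ≤ ∑ _k : Fin N, 1 := Finset.sum_le_sum (by intro k _; split <;> simp)
  _ = N := by simp

lemma below_succ {N : ℕ} (g : Fin N → Bool) (j : Fin N) :
    below g ((j : ℕ) + 1) = below g (j : ℕ) + cond (g j) 1 0 := by
  have step : ∀ k : Fin N, (if (k : ℕ) < (j : ℕ) + 1 ∧ g k = true then 1 else 0)
      = (if (k : ℕ) < (j : ℕ) ∧ g k = true then 1 else 0)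
        + (if k = j ∧ g k = true then (1:ℕ) else 0) := by
    intro k
    have hkj : ((k : ℕ) < (j : ℕ) + 1) ↔ ((k : ℕ) < (j : ℕ) ∨ k = j) := by
      rw [Fin.ext_iff]; omega
    by_cases h3 : k = j
    · subst h3
      by_cases h2 : g k = true <;> simp [h2, Nat.lt_succ_self]
    · have hne : (k : ℕ) ≠ (j : ℕ) := fun hc => h3 (Fin.ext hc)
      have h4 : ((k : ℕ) < (j : ℕ) + 1) ↔ ((k : ℕ) < (j : ℕ)) := by omega
      simp [h3, h4]
  rw [below, below]
  rw [Finset.sum_congr rfl (fun k _ => step k), Finset.sum_add_distrib]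
  congr 1
  rw [Finset.sum_eq_single j]
  · by_cases h : g j = true <;> simp [h]
  · intro k _ hk; simp [hk]
  · intro h; exact absurd (Finset.mem_univ j) h

lemma below_mono {N : ℕ} (g : Fin N → Bool) {j j' : ℕ} (h : j ≤ j') :
    below g j ≤ below g j' := by
  apply Finset.sum_le_sum
  intro k _
  split <;> split <;> simp_all <;> omega

lemma count_lt {N : ℕ} (j : ℕ) (hj : j ≤ N) :
    (∑ k : Fin N, if (k : ℕ) < j then (1:ℕ) else 0) = j := by
  induction j with
  | zero => simp
  | succ j ih =>
    have step : ∀ k : Fin N, (if (k : ℕ) < j + 1 then (1:ℕ) else 0)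
        = (if (k : ℕ) < j then 1 else 0) + (if k = (⟨j, hj⟩ : Fin N) then 1 else 0) := by
      intro k
      by_cases h3 : k = (⟨j, hj⟩ : Fin N)
      · subst h3; simp [Nat.lt_succ_self]
      · have hne : (k : ℕ) ≠ j := fun hc => h3 (Fin.ext hc)
        have h4 : ((k : ℕ) < j + 1) ↔ ((k : ℕ) < j) := by omega
        simp [h3, h4]
    rw [Finset.sum_congr rfl (fun k _ => step k), Finset.sum_add_distrib,
      ih (Nat.le_of_succ_le hj), Finset.sum_eq_single (⟨j, hj⟩ : Fin N)]
    · simp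
    · intro k _ hk; simp [hk]
    · intro h; exact absurd (Finset.mem_univ _) h

lemma below_le_count {N : ℕ} (g : Fin N → Bool) (j : ℕ) (hj : j ≤ N) : below g j ≤ j := by
  calc below g j ≤ ∑ k : Fin N, if (k : ℕ) < j then 1 else 0 := by
        apply Finset.sum_le_sum; intro k _; split <;> split <;> simp_all
  _ = j := count_lt j hj

/-- Path-count of the parity automaton: `q` = target parity of `|S|`, second arg the
remaining letters of `w`, then the current 0-based index and the current state
(parity of number of `true`s of `g` so far). -/
def A (q : Bool) : List Bool → ℕ → Bool → ℕ
  | [], _, ε => if ε = q then 1 else 0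
  | b :: l, i, ε =>
      (if b = !ε then A q l (i + 1) (!ε) else 0) +
      (if b = (q ^^ (dOdd (i + 1) ^^ ε)) then A q l (i + 1) ε else 0)

/-- Chain condition for the even case. -/
def chE : Bool → List Bool → Bool
  | ε, [] => ε == false
  | _, [_] => false
  | ε, b₁ :: b₂ :: l => (b₁ == !ε) && chE b₂ l

/-- Chain condition for the odd case. -/
def chO : List Bool → Bool
  | [] => true
  | [_] => false
  | b₁ :: b₂ :: l => (b₂ == !b₁) && chO l

lemma A_eval_even : ∀ (l : List Bool) (i : ℕ) (ε : Bool), Even i → Even l.length →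
    A false l i ε = if chE ε l = true then 2 ^ (l.length / 2) else 0
  | [], i, ε, _, _ => by
    cases ε <;> simp [A, chE]
  | [b], i, ε, _, hl => by simp at hl
  | b₁ :: b₂ :: l, i, ε, hi, hl => by
    have hi1 : dOdd (i + 1) = true := by
      rw [dOdd_true_iff]; exact Even.add_one hi
    have hi2 : dOdd (i + 1 + 1) = false := by
      rw [dOdd_false_iff]; exact Nat.even_add.mpr (by simp [hi])
    have hl' : Even l.length := by simp at hl; simpa [Nat.even_add_one, parity_simps] using hl
    have ih := A_eval_even l (i + 2) b₂ (Nat.even_add.mpr (by simp [hi])) hl'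
    have inner : ∀ σ : Bool, A false (b₂ :: l) (i + 1) σ = A false l (i + 2) b₂ := by
      intro σ
      show (if b₂ = !σ then A false l (i + 1 + 1) (!σ) else 0) +
        (if b₂ = (false ^^ (dOdd (i + 1 + 1) ^^ σ)) then A false l (i + 1 + 1) σ else 0) = _
      rw [hi2]
      cases σ <;> cases b₂ <;> simp
    show (if b₁ = !ε then A false (b₂ :: l) (i + 1) (!ε) else 0) +
        (if b₁ = (false ^^ (dOdd (i + 1) ^^ ε)) then A false (b₂ :: l) (i + 1) ε else 0) = _
    rw [hi1, inner, inner, ih]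
    have hlen : (b₁ :: b₂ :: l).length / 2 = l.length / 2 + 1 := by simp; omega
    rw [hlen]
    show _ = if ((b₁ == !ε) && chE b₂ l) = true then _ else _
    cases b₁ <;> cases ε <;> by_cases h : chE b₂ l = true <;> simp [h] <;> ring

lemma A_eval_odd_sum : ∀ (l : List Bool) (i : ℕ) (ε : Bool), Even i → Even l.length →
    A true l i ε + A true l i (!ε) = if chO l = true then 2 ^ (l.length / 2) else 0
  | [], i, ε, _, _ => by cases ε <;> simp [A, chO]
  | [b], i, ε, _, hl => by simp at hl
  | b₁ :: b₂ :: l, i, ε, hi, hl => by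
    have hi1 : dOdd (i + 1) = true := by
      rw [dOdd_true_iff]; exact Even.add_one hi
    have hi2 : dOdd (i + 1 + 1) = false := by
      rw [dOdd_false_iff]; exact Nat.even_add.mpr (by simp [hi])
    have hl' : Even l.length := by simp at hl; simpa [Nat.even_add_one, parity_simps] using hl
    have ih := A_eval_odd_sum l (i + 2) b₁ (Nat.even_add.mpr (by simp [hi])) hl'
    have first : ∀ σ : Bool, A true (b₁ :: b₂ :: l) i σ = A true (b₂ :: l) (i + 1) b₁ := by
      intro σ
      show (if b₁ = !σ then A true (b₂ :: l) (i + 1) (!σ) else 0) +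
        (if b₁ = (true ^^ (dOdd (i + 1) ^^ σ)) then A true (b₂ :: l) (i + 1) σ else 0) = _
      rw [hi1]
      cases σ <;> cases b₁ <;> simp
    have second : A true (b₂ :: l) (i + 1) b₁ =
        if b₂ = !b₁ then A true l (i + 2) (!b₁) + A true l (i + 2) b₁ else 0 := by
      show (if b₂ = !b₁ then A true l (i + 1 + 1) (!b₁) else 0) +
        (if b₂ = (true ^^ (dOdd (i + 1 + 1) ^^ b₁)) then A true l (i + 1 + 1) b₁ else 0) = _
      rw [hi2]
      cases b₁ <;> cases b₂ <;> simp
    rw [first, first, second]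
    have hlen : (b₁ :: b₂ :: l).length / 2 = l.length / 2 + 1 := by simp; omega
    rw [hlen]
    show _ = if ((b₂ == !b₁) && chO l) = true then _ else _
    by_cases h : b₂ = !b₁
    · have : A true l (i + 2) (!b₁) + A true l (i + 2) b₁ =
          if chO l = true then 2 ^ (l.length / 2) else 0 := by
        rw [Nat.add_comm]
        have := A_eval_odd_sum l (i + 2) b₁ (Nat.even_add.mpr (by simp [hi])) hl'
        exact this
      rw [if_pos h, this]
      by_cases h2 : chO l = true <;> simp [h, h2] <;> ring
    · rw [if_neg h]
      have : (b₂ == !b₁) = false := by cases b₁ <;> cases b₂ <;> simp_all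
      simp [this]

lemma A_eval_odd_top (l : List Bool) (hl : Even l.length) (hne : l ≠ []) :
    A true l 0 false = if chO l = true then 2 ^ (l.length / 2 - 1) else 0 := by
  match l, hl, hne with
  | [b], hl, _ => simp at hl
  | b₁ :: b₂ :: l, hl, _ =>
    have hl' : Even l.length := by simp at hl; simpa [Nat.even_add_one, parity_simps] using hl
    have first : A true (b₁ :: b₂ :: l) 0 false = A true (b₂ :: l) 1 b₁ := by
      show (if b₁ = !false then A true (b₂ :: l) (0 + 1) (!false) else 0) +
        (if b₁ = (true ^^ (dOdd (0 + 1) ^^ false)) then A true (b₂ :: l) (0 + 1) false else 0) = _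
      have : dOdd (0 + 1) = true := by rw [dOdd_true_iff]; decide
      rw [this]
      cases b₁ <;> simp
    have second : A true (b₂ :: l) 1 b₁ =
        if b₂ = !b₁ then A true l 2 (!b₁) + A true l 2 b₁ else 0 := by
      show (if b₂ = !b₁ then A true l (1 + 1) (!b₁) else 0) +
        (if b₂ = (true ^^ (dOdd (1 + 1) ^^ b₁)) then A true l (1 + 1) b₁ else 0) = _
      have : dOdd (1 + 1) = false := by rw [dOdd_false_iff]; decide
      rw [this]
      cases b₁ <;> cases b₂ <;> simp
    rw [first, second]
    have hsum : A true l 2 b₁ + A true l 2 (!b₁) = if chO l = true then 2 ^ (l.length / 2) else 0 :=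
      A_eval_odd_sum l 2 b₁ (by decide) hl'
    have hlen : (b₁ :: b₂ :: l).length / 2 - 1 = l.length / 2 := by simp; omega
    rw [hlen]
    show _ = if ((b₂ == !b₁) && chO l) = true then _ else _
    by_cases h : b₂ = !b₁
    · rw [if_pos h, Nat.add_comm, hsum]
      by_cases h2 : chO l = true <;> simp [h, h2]
    · rw [if_neg h]
      have : (b₂ == !b₁) = false := by cases b₁ <;> cases b₂ <;> simp_all
      simp [this]

/-- A list satisfies both chain conditions iff the state is `false` and the list is the
alternating list starting with `true`. -/
lemma chain_alt : ∀ (l : List Bool) (ε : Bool), Even l.length →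
    ((chE ε l = true ∧ chO l = true) ↔
      (ε = false ∧ ∀ (j : ℕ) (h : j < l.length), l[j] = !(dOdd j)))
  | [], ε, _ => by
    constructor
    · rintro ⟨hE, _⟩
      refine ⟨?_, by intro j h; simp at h⟩
      cases ε
      · rfl
      · simp [chE] at hE
    · rintro ⟨hε, _⟩
      subst hε
      exact ⟨by simp [chE], by simp [chO]⟩
  | [b], ε, hl => by simp at hl
  | b₁ :: b₂ :: l, ε, hl => by
    have hl' : Even l.length := by simp at hl; simpa [Nat.even_add_one, parity_simps] using hl
    constructor
    · rintro ⟨hE, hO⟩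
      rw [chE] at hE; rw [chO] at hO
      have h1 : b₁ = !ε := by simpa using Bool.and_elim_left hE
      have h2 : b₂ = !b₁ := by simpa using Bool.and_elim_left hO
      have hE' : chE b₂ l = true := Bool.and_elim_right hE
      have hO' : chO l = true := Bool.and_elim_right hO
      obtain ⟨hb2, htail⟩ := (chain_alt l b₂ hl').mp ⟨hE', hO'⟩
      have hε : ε = false := by
        rw [h1, Bool.not_not] at h2
        rw [← h2, hb2]
      subst hε
      refine ⟨rfl, ?_⟩
      intro j hj
      match j with
      | 0 => simpa using h1
      | 1 =>
        show b₂ = _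
        rw [hb2]
        simp
      | (j + 2) =>
        have hj' : j < l.length := by simpa using hj
        have := htail j hj'
        simp only [List.getElem_cons_succ]
        rw [this]
        have hd : dOdd (j + 2) = dOdd j := by simp
        rw [hd]
    · rintro ⟨hε, h⟩
      subst hε
      have h1 : b₁ = true := by have := h 0 (by simp); exact this.trans (by simp)
      have h2 : b₂ = false := by
        have := h 1 (by simp)
        simpa using this
      have htail : ∀ (j : ℕ) (hj : j < l.length), l[j] = !(dOdd j) := by
        intro j hj
        have := h (j + 2) (by simpa using hj)
        simp only [List.getElem_cons_succ] at this
        rw [this]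
        have hd : dOdd (j + 2) = dOdd j := by simp
        rw [hd]
      obtain ⟨hE', hO'⟩ := (chain_alt l b₂ hl').mpr ⟨h2, htail⟩
      constructor
      · rw [chE]
        simp only [Bool.and_eq_true, beq_iff_eq]
        exact ⟨by rw [h1]; rfl, hE'⟩
      · rw [chO]
        simp only [Bool.and_eq_true, beq_iff_eq]
        exact ⟨by rw [h1, h2]; rfl, hO'⟩

/-- Local parity form of the pattern condition, with running index offset `i`,
incoming state `ε`, and target total parity `q`. -/
def GP (q : Bool) (i : ℕ) (ε : Bool) {N : ℕ} (w g : Fin N → Bool) : Prop :=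
  (∀ j : Fin N, w j = cond (g j) (!(ε ^^ dOdd (below g (j : ℕ))))
      (q ^^ (dOdd (i + (j : ℕ) + 1) ^^ (ε ^^ dOdd (below g (j : ℕ)))))) ∧
    ((ε ^^ dOdd (below g N)) = q)

instance GP.decidable (q : Bool) (i : ℕ) (ε : Bool) {N : ℕ} (w g : Fin N → Bool) :
    Decidable (GP q i ε w g) := by unfold GP; infer_instance

lemma GP_cons (q : Bool) (i : ℕ) (ε b : Bool) {N : ℕ} (w : Fin (N + 1) → Bool)
    (g : Fin N → Bool) :
    GP q i ε w (Fin.cons b g) ↔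
      (w 0 = cond b (!ε) (q ^^ (dOdd (i + 1) ^^ ε))) ∧
        GP q (i + 1) (ε ^^ b) (fun j => w j.succ) g := by
  rw [GP, GP, Fin.forall_fin_succ]
  have hb : ∀ j : Fin N, below (Fin.cons b g) ((j.succ : ℕ)) = cond b 1 0 + below g (j : ℕ) := by
    intro j; rw [Fin.val_succ, below_cons]
  have hfin : below (Fin.cons b g) (N + 1) = cond b 1 0 + below g N := below_cons b g N
  constructor
  · rintro ⟨⟨h0, hs⟩, hf⟩
    refine ⟨?_, ?_, ?_⟩
    · simpa [Bool.xor_false] using h0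
    · intro j
      have := hs j
      rw [Fin.cons_succ, hb j, dOdd_cond] at this
      rw [this]
      have hidx : i + ((j : ℕ) + 1) + 1 = i + 1 + (j : ℕ) + 1 := by omega
      simp only [Fin.val_succ, hidx, ← Bool.xor_assoc]
    · rw [hfin, dOdd_cond, ← Bool.xor_assoc] at hf
      exact hf
  · rintro ⟨h0, hs, hf⟩
    refine ⟨⟨?_, ?_⟩, ?_⟩
    · simpa [Bool.xor_false] using h0
    · intro j
      have := hs j
      rw [Fin.cons_succ, hb j, dOdd_cond]
      rw [this]
      have hidx : i + ((j : ℕ) + 1) + 1 = i + 1 + (j : ℕ) + 1 := by omega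
      simp only [Fin.val_succ, hidx, ← Bool.xor_assoc]
    · rw [hfin, dOdd_cond, ← Bool.xor_assoc]
      exact hf

lemma key : ∀ (N : ℕ) (q : Bool) (i : ℕ) (ε : Bool) (w : Fin N → Bool),
    (Finset.univ.filter fun g : Fin N → Bool => GP q i ε w g).card = A q (List.ofFn w) i ε
  | 0, q, i, ε, w => by
    rw [List.ofFn_zero]
    show _ = if ε = q then 1 else 0
    by_cases h : ε = q
    · rw [if_pos h, Finset.filter_true_of_mem]
      · simp
      · intro g _
        exact ⟨fun j => j.elim0, by simpa using h⟩
    · rw [if_neg h, Finset.card_eq_zero, Finset.filter_eq_empty_iff]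
      intro g _
      intro hGP
      exact h (by simpa using hGP.2)
  | N + 1, q, i, ε, w => by
    rw [Finset.card_filter]
    rw [← Equiv.sum_comp (Fin.consEquiv (fun _ : Fin (N + 1) => Bool))
      (fun g => if GP q i ε w g then (1:ℕ) else 0), Fintype.sum_prod_type]
    rw [Fintype.sum_bool]
    have hbranch : ∀ (b : Bool) (g : Fin N → Bool),
        (if GP q i ε w ((Fin.consEquiv (fun _ : Fin (N + 1) => Bool)) (b, g)) then (1:ℕ) else 0)
        = if w 0 = cond b (!ε) (q ^^ (dOdd (i + 1) ^^ ε)) then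
            (if GP q (i + 1) (ε ^^ b) (fun j => w j.succ) g then 1 else 0) else 0 := by
      intro b g
      have he : (Fin.consEquiv (fun _ : Fin (N + 1) => Bool)) (b, g) = Fin.cons b g := rfl
      rw [he]
      by_cases h1 : w 0 = cond b (!ε) (q ^^ (dOdd (i + 1) ^^ ε)) <;>
        by_cases h2 : GP q (i + 1) (ε ^^ b) (fun j => w j.succ) g <;>
        simp [GP_cons, h1, h2]
    have hsum : ∀ b : Bool,
        (∑ g : Fin N → Bool,
          if GP q i ε w ((Fin.consEquiv (fun _ : Fin (N + 1) => Bool)) (b, g)) then (1:ℕ) else 0)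
        = if w 0 = cond b (!ε) (q ^^ (dOdd (i + 1) ^^ ε)) then
            A q (List.ofFn (fun j => w j.succ)) (i + 1) (ε ^^ b) else 0 := by
      intro b
      rw [Finset.sum_congr rfl (fun g _ => hbranch b g)]
      by_cases h1 : w 0 = cond b (!ε) (q ^^ (dOdd (i + 1) ^^ ε))
      · rw [if_pos h1, ← key N q (i + 1) (ε ^^ b) (fun j => w j.succ), Finset.card_filter]
        apply Finset.sum_congr rfl
        intro g _
        rw [if_pos h1]
      · rw [if_neg h1]
        apply Finset.sum_eq_zero
        intro g _
        rw [if_neg h1]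
    rw [hsum true, hsum false]
    rw [List.ofFn_succ]
    show _ = (if w 0 = !ε then A q (List.ofFn fun j => w j.succ) (i + 1) (!ε) else 0) +
      (if w 0 = (q ^^ (dOdd (i + 1) ^^ ε)) then A q (List.ofFn fun j => w j.succ) (i + 1) ε else 0)
    congr 1
    · simp [Bool.xor_true]
    · simp [Bool.xor_false]

/-- Bayer–Diaconis encoding: for a shuffle word `f : Fin n → Fin a`, the card at final
position `i` originally occupied 1-based position `pos f i`. -/
def pos {n a : ℕ} (f : Fin n → Fin a) (i : Fin n) : ℕ :=
  (Finset.univ.filter fun j => f j < f i).card +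
    (Finset.univ.filter fun j => j ≤ i ∧ f j = f i).card

/-- Color pattern of the shuffle word `f` for the alternating deck (original position `p`
red iff `p` odd): final position `i` is red (`true`) iff `pos f i` is odd. -/
def wAlt {n : ℕ} (f : Fin n → Fin 2) : Fin n → Bool :=
  fun i => decide (Odd (pos f i))

/-- The alternating color word: 1-based position `p` is red iff `p` is odd. -/
def w0 (n : ℕ) : Fin n → Bool := fun i => decide (Odd ((i : ℕ) + 1))

/-- `w : Fin N → Bool` (red = `true`) is a riffle of the cut of the alternating deck at `p`. -/
def IsRiffle (N p : ℕ) (w : Fin N → Bool) : Prop :=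
  ∃ S : Finset (Fin N), S.card = p ∧
    (∀ i ∈ S, w i = decide (Odd (S.filter fun i' => i' ≤ i).card)) ∧
    (∀ i ∉ S, w i = decide (Odd (p + ((Finset.univ \ S).filter fun i' => i' ≤ i).card)))

/-- `w` results from an odd cut of the alternating deck. -/
def memO (n : ℕ) (w : Fin (2 * n) → Bool) : Prop :=
  ∃ p, Odd p ∧ 1 ≤ p ∧ p ≤ 2 * n - 1 ∧ IsRiffle (2 * n) p w

/-- `w` results from an even cut of the alternating deck. -/
def memE (n : ℕ) (w : Fin (2 * n) → Bool) : Prop :=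
  ∃ p, Even p ∧ p ≤ 2 * n ∧ IsRiffle (2 * n) p w

/-- `g` is the indicator of the set of positions taken from the first pile; `Good w g`
says the resulting color pattern is `w`. -/
def Good {N : ℕ} (w g : Fin N → Bool) : Prop :=
  ∀ j : Fin N, w j = cond (g j) (dOdd (below g ((j : ℕ) + 1)))
    (dOdd (below g N + (((j : ℕ) + 1) - below g ((j : ℕ) + 1))))

instance Good.decidable {N : ℕ} (w g : Fin N → Bool) : Decidable (Good w g) := by
  unfold Good; infer_instance

lemma Good_iff_GP {N : ℕ} (w g : Fin N → Bool) (q : Bool) :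
    (Good w g ∧ dOdd (below g N) = q) ↔ GP q 0 false w g := by
  have hsub : ∀ j : Fin N, below g ((j : ℕ) + 1) ≤ (j : ℕ) + 1 :=
    fun j => below_le_count g ((j : ℕ) + 1) j.isLt
  have branch : dOdd (below g N) = q → ∀ j : Fin N,
      (cond (g j) (dOdd (below g ((j : ℕ) + 1)))
        (dOdd (below g N + (((j : ℕ) + 1) - below g ((j : ℕ) + 1)))))
      = cond (g j) (!(false ^^ dOdd (below g (j : ℕ))))
        (q ^^ (dOdd (0 + (j : ℕ) + 1) ^^ (false ^^ dOdd (below g (j : ℕ))))) := by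
    intro hq j
    rcases hgj : g j with _ | _
    · simp only [cond_false, Bool.false_xor, Nat.zero_add]
      rw [dOdd_add, dOdd_sub (hsub j), hq, below_succ g j, hgj]
      simp [Bool.xor_assoc]
    · simp only [cond_true, Bool.false_xor]
      rw [below_succ g j, hgj]
      simp
  constructor
  · rintro ⟨hG, hq⟩
    refine ⟨fun j => by rw [hG j, branch hq j], by simpa using hq⟩
  · rintro ⟨hG, hq⟩
    have hq' : dOdd (below g N) = q := by simpa using hq
    exact ⟨fun j => by rw [hG j, ← branch hq' j], hq'⟩

lemma fin_two_cases (x : Fin 2) : x = 0 ∨ x = 1 := by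
  fin_cases x
  · exact Or.inl rfl
  · exact Or.inr rfl

lemma pos_eq {N : ℕ} (f : Fin N → Fin 2) (j : Fin N) :
    pos f j = cond (decide (f j = 0))
      (below (fun k => decide (f k = 0)) ((j : ℕ) + 1))
      (below (fun k => decide (f k = 0)) N +
        (((j : ℕ) + 1) - below (fun k => decide (f k = 0)) ((j : ℕ) + 1))) := by
  set g : Fin N → Bool := fun k => decide (f k = 0) with hg
  have hle : ∀ k : Fin N, (k ≤ j) ↔ ((k : ℕ) < (j : ℕ) + 1) := by
    intro k; rw [Fin.le_def]; omega
  rcases fin_two_cases (f j) with h | h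
  · have hgj : decide (f j = 0) = true := by simp [h]
    rw [pos, hgj, cond_true, h]
    have h1 : (Finset.univ.filter fun k => f k < (0 : Fin 2)) = ∅ := by
      apply Finset.filter_eq_empty_iff.mpr
      intro k _
      exact Fin.not_lt_zero _
    rw [h1, Finset.card_empty, Nat.zero_add, Finset.card_filter, below]
    apply Finset.sum_congr rfl
    intro k _
    congr 1
    rw [eq_iff_iff]
    constructor
    · rintro ⟨hk1, hk2⟩
      exact ⟨by rw [← hle k]; exact hk1, by simp [hg, hk2]⟩
    · rintro ⟨hk1, hk2⟩
      exact ⟨(hle k).mpr hk1, by simpa [hg] using hk2⟩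
  · have hgj : decide (f j = 0) = false := by simp [h]
    rw [pos, hgj, cond_false, h]
    congr 1
    · -- cards of `f k < 1` equals number of trues
      rw [Finset.card_filter, below]
      apply Finset.sum_congr rfl
      intro k _
      congr 1
      rw [eq_iff_iff]
      rcases fin_two_cases (f k) with hk | hk <;> simp [hk, hg, k.isLt]
    · -- second summand
      have hkey : (Finset.univ.filter fun k => k ≤ j ∧ f k = 1).card
          + below g ((j : ℕ) + 1) = (j : ℕ) + 1 := by
        rw [Finset.card_filter, below, ← Finset.sum_add_distrib]
        have hpt : ∀ k : Fin N, ((if k ≤ j ∧ f k = 1 then (1:ℕ) else 0)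
            + (if (k : ℕ) < (j : ℕ) + 1 ∧ g k = true then 1 else 0))
            = if (k : ℕ) < (j : ℕ) + 1 then 1 else 0 := by
          intro k
          by_cases hkj : (k : ℕ) < (j : ℕ) + 1
          · have hkj' : k ≤ j := (hle k).mpr hkj
            rcases fin_two_cases (f k) with hk | hk
            · have hgk : g k = true := by simp [hg, hk]
              simp [hk, hkj, hkj', hgk]
            · have hgk : g k = false := by simp [hg, hk]
              simp [hk, hkj, hkj', hgk]
          · have hkj' : ¬ k ≤ j := fun hc => hkj ((hle k).mp hc)
            simp [hkj, hkj']
        rw [Finset.sum_congr rfl (fun k _ => hpt k), count_lt ((j : ℕ) + 1) j.isLt]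
      omega
  
lemma wAlt_iff {N : ℕ} (f : Fin N → Fin 2) (w : Fin N → Bool) :
    wAlt f = w ↔ Good w (fun k => decide (f k = 0)) := by
  rw [funext_iff]
  constructor
  · intro h j
    rw [← h j, wAlt, pos_eq]
    rcases hgj : decide (f j = 0) with _ | _ <;> simp [hgj, dOdd]
  · intro h j
    rw [wAlt, pos_eq, h j]
    rcases hgj : decide (f j = 0) with _ | _ <;> simp [hgj, dOdd]

lemma count_f_eq_count_g {N : ℕ} (w : Fin N → Bool) :
    (Finset.univ.filter fun f : Fin N → Fin 2 => wAlt f = w).card =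
      (Finset.univ.filter fun g : Fin N → Bool => Good w g).card := by
  apply Finset.card_bij' (fun f _ => fun k => decide (f k = 0))
    (fun g _ => fun k => cond (g k) 0 1)
  · intro f hf
    funext k
    rcases fin_two_cases (f k) with h | h <;> simp [h]
  · intro g hg
    funext k
    cases hk : g k <;> simp [hk]
  · intro f hf
    simp only [Finset.mem_filter, Finset.mem_univ, true_and] at hf ⊢
    exact (wAlt_iff f w).mp hf
  · intro g hg
    simp only [Finset.mem_filter, Finset.mem_univ, true_and] at hg ⊢
    rw [wAlt_iff]
    have hco : (fun k => decide ((cond (g k) (0 : Fin 2) 1) = 0)) = g := by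
      funext k
      cases hk : g k <;> simp [hk]
    rw [hco]
    exact hg

section RiffleBridge

variable {N : ℕ} (S : Finset (Fin N)) (g : Fin N → Bool)

lemma filt1 (hS : ∀ j, g j = true ↔ j ∈ S) (i : Fin N) :
    (S.filter fun i' => i' ≤ i).card = below g ((i : ℕ) + 1) := by
  have : (S.filter fun i' => i' ≤ i) =
      Finset.univ.filter (fun k : Fin N => (k : ℕ) < (i : ℕ) + 1 ∧ g k = true) := by
    ext k
    simp only [Finset.mem_filter, Finset.mem_univ, true_and, hS, Fin.le_def, Nat.lt_succ_iff]
    exact and_comm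
  rw [this, Finset.card_filter, below]

lemma filtT (hS : ∀ j, g j = true ↔ j ∈ S) : S.card = below g N := by
  have : S = Finset.univ.filter (fun k : Fin N => (k : ℕ) < N ∧ g k = true) := by
    ext k
    simp [hS, k.isLt]
  rw [this, Finset.card_filter, below]

lemma filt2 (hS : ∀ j, g j = true ↔ j ∈ S) (i : Fin N) :
    (((Finset.univ \ S).filter fun i' => i' ≤ i).card) + below g ((i : ℕ) + 1)
      = (i : ℕ) + 1 := by
  have h1 : ((Finset.univ \ S).filter fun i' => i' ≤ i) =
      Finset.univ.filter (fun k : Fin N => (k : ℕ) < (i : ℕ) + 1 ∧ g k = false) := by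
    ext k
    simp only [Finset.mem_filter, Finset.mem_sdiff, Finset.mem_univ, true_and, Fin.le_def,
      Nat.lt_succ_iff]
    constructor
    · rintro ⟨hk1, hk2⟩
      refine ⟨hk2, ?_⟩
      cases hgk : g k
      · rfl
      · exact absurd ((hS k).mp hgk) hk1
    · rintro ⟨hk1, hk2⟩
      refine ⟨fun hc => ?_, hk1⟩
      rw [(hS k).mpr hc] at hk2
      simp at hk2
  rw [h1, Finset.card_filter, below, ← Finset.sum_add_distrib]
  have hpt : ∀ k : Fin N, ((if (k : ℕ) < (i : ℕ) + 1 ∧ g k = false then (1:ℕ) else 0)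
      + (if (k : ℕ) < (i : ℕ) + 1 ∧ g k = true then 1 else 0))
      = if (k : ℕ) < (i : ℕ) + 1 then 1 else 0 := by
    intro k
    by_cases hki : (k : ℕ) < (i : ℕ) + 1 <;> cases hgk : g k <;> simp [hki, hgk]
  rw [Finset.sum_congr rfl (fun k _ => hpt k), count_lt ((i : ℕ) + 1) i.isLt]

lemma isRiffle_iff (p : ℕ) (w : Fin N → Bool) :
    IsRiffle N p w ↔ ∃ g : Fin N → Bool, below g N = p ∧ Good w g := by
  constructor
  · rintro ⟨S, hc, h1, h2⟩
    set g : Fin N → Bool := fun j => decide (j ∈ S) with hgdef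
    have hS : ∀ j, g j = true ↔ j ∈ S := by intro j; simp [hgdef]
    refine ⟨g, by rw [← filtT S g hS, hc], ?_⟩
    intro j
    by_cases hj : j ∈ S
    · have hgj : g j = true := (hS j).mpr hj
      rw [hgj, cond_true, ← filt1 S g hS j]
      exact h1 j hj
    · have hgj : g j = false := by
        cases hgk : g j
        · rfl
        · exact absurd ((hS j).mp hgk) hj
      rw [hgj, cond_false]
      have hf2 := filt2 S g hS j
      have hble : below g N = p := by rw [← filtT S g hS, hc]
      have : ((Finset.univ \ S).filter fun i' => i' ≤ j).card
          = ((j : ℕ) + 1) - below g ((j : ℕ) + 1) := by omega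
      rw [← this, hble]
      simpa [dOdd] using h2 j hj
  · rintro ⟨g, hp, hG⟩
    set S : Finset (Fin N) := Finset.univ.filter (fun j => g j = true) with hSdef
    have hS : ∀ j, g j = true ↔ j ∈ S := by intro j; simp [hSdef]
    refine ⟨S, by rw [filtT S g hS, hp], ?_, ?_⟩
    · intro i hi
      have hgi : g i = true := (hS i).mpr hi
      have := hG i
      rw [hgi, cond_true] at this
      rw [this, filt1 S g hS i]
      simp [dOdd]
    · intro i hi
      have hgi : g i = false := by
        cases hgk : g i
        · rfl
        · exact absurd ((hS i).mp hgk) hi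
      have := hG i
      rw [hgi, cond_false] at this
      rw [this]
      have hf2 := filt2 S g hS i
      have hsle : below g ((i : ℕ) + 1) ≤ (i : ℕ) + 1 := below_le_count g _ i.isLt
      have hcard : ((Finset.univ \ S).filter fun i' => i' ≤ i).card
          = ((i : ℕ) + 1) - below g ((i : ℕ) + 1) := by omega
      rw [hcard, hp]
      simp [dOdd]

end RiffleBridge

section Assembly

variable {n : ℕ} (w : Fin (2 * n) → Bool)

lemma ofFn_length : (List.ofFn w).length = 2 * n := by simp

lemma countE_eq :
    (Finset.univ.filter fun g : Fin (2 * n) → Bool =>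
      Good w g ∧ Even (below g (2 * n))).card
    = if chE false (List.ofFn w) = true then 2 ^ n else 0 := by
  have h1 : (Finset.univ.filter fun g : Fin (2 * n) → Bool =>
      Good w g ∧ Even (below g (2 * n)))
      = Finset.univ.filter fun g : Fin (2 * n) → Bool => GP false 0 false w g := by
    apply Finset.filter_congr
    intro g _
    rw [← Good_iff_GP w g false]
    constructor
    · rintro ⟨h, he⟩; exact ⟨h, by rwa [dOdd_false_iff]⟩
    · rintro ⟨h, he⟩; exact ⟨h, by rwa [← dOdd_false_iff]⟩
  rw [h1, key, A_eval_even _ 0 false (by decide) (by rw [ofFn_length]; exact even_two_mul n)]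
  rw [ofFn_length]
  have h2 : 2 * n / 2 = n := by omega
  rw [h2]

lemma countO_eq (hn : 1 ≤ n) :
    (Finset.univ.filter fun g : Fin (2 * n) → Bool =>
      Good w g ∧ Odd (below g (2 * n))).card
    = if chO (List.ofFn w) = true then 2 ^ (n - 1) else 0 := by
  have h1 : (Finset.univ.filter fun g : Fin (2 * n) → Bool =>
      Good w g ∧ Odd (below g (2 * n)))
      = Finset.univ.filter fun g : Fin (2 * n) → Bool => GP true 0 false w g := by
    apply Finset.filter_congr
    intro g _
    rw [← Good_iff_GP w g true]
    constructor
    · rintro ⟨h, he⟩; exact ⟨h, by rwa [dOdd_true_iff]⟩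
    · rintro ⟨h, he⟩; exact ⟨h, by rwa [← dOdd_true_iff]⟩
  rw [h1, key, A_eval_odd_top _ (by rw [ofFn_length]; exact even_two_mul n)
    (by intro hc; have := ofFn_length w; rw [hc] at this; simp at this; omega)]
  rw [ofFn_length]
  have h2 : 2 * n / 2 - 1 = n - 1 := by omega
  rw [h2]

lemma total_split :
    (Finset.univ.filter fun f : Fin (2 * n) → Fin 2 => wAlt f = w).card
    = (Finset.univ.filter fun g : Fin (2 * n) → Bool =>
        Good w g ∧ Even (below g (2 * n))).card
      + (Finset.univ.filter fun g : Fin (2 * n) → Bool =>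
        Good w g ∧ Odd (below g (2 * n))).card := by
  rw [count_f_eq_count_g]
  have := Finset.card_filter_add_card_filter_not
    (s := Finset.univ.filter (fun g : Fin (2 * n) → Bool => Good w g))
    (p := fun g => Even (below g (2 * n)))
  rw [Finset.filter_filter, Finset.filter_filter] at this
  rw [← this]
  congr 1
  exact congrArg Finset.card
    (Finset.filter_congr (fun g _ => by rw [Nat.not_even_iff_odd]))

lemma memE_iff : memE n w ↔ chE false (List.ofFn w) = true := by
  constructor
  · rintro ⟨p, hpE, _, hR⟩
    obtain ⟨g, hgp, hgG⟩ := (isRiffle_iff p w).mp hR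
    by_contra hc
    have h0 := countE_eq w
    rw [if_neg hc] at h0
    have : g ∈ Finset.univ.filter fun g : Fin (2 * n) → Bool =>
        Good w g ∧ Even (below g (2 * n)) := by
      simp only [Finset.mem_filter, Finset.mem_univ, true_and]
      exact ⟨hgG, by rwa [hgp]⟩
    have := Finset.card_pos.mpr ⟨g, this⟩
    omega
  · intro hc
    have h0 := countE_eq w
    rw [if_pos hc] at h0
    have hpos : 0 < (Finset.univ.filter fun g : Fin (2 * n) → Bool =>
        Good w g ∧ Even (below g (2 * n))).card := by
      rw [h0]; positivity
    obtain ⟨g, hg⟩ := Finset.card_pos.mp hpos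
    simp only [Finset.mem_filter, Finset.mem_univ, true_and] at hg
    exact ⟨below g (2 * n), hg.2, below_le g (2 * n),
      (isRiffle_iff _ w).mpr ⟨g, rfl, hg.1⟩⟩

lemma memO_iff (hn : 1 ≤ n) : memO n w ↔ chO (List.ofFn w) = true := by
  constructor
  · rintro ⟨p, hpO, _, _, hR⟩
    obtain ⟨g, hgp, hgG⟩ := (isRiffle_iff p w).mp hR
    by_contra hc
    have h0 := countO_eq w hn
    rw [if_neg hc] at h0
    have : g ∈ Finset.univ.filter fun g : Fin (2 * n) → Bool =>
        Good w g ∧ Odd (below g (2 * n)) := by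
      simp only [Finset.mem_filter, Finset.mem_univ, true_and]
      exact ⟨hgG, by rwa [hgp]⟩
    have := Finset.card_pos.mpr ⟨g, this⟩
    omega
  · intro hc
    have h0 := countO_eq w hn
    rw [if_pos hc] at h0
    have hpos : 0 < (Finset.univ.filter fun g : Fin (2 * n) → Bool =>
        Good w g ∧ Odd (below g (2 * n))).card := by
      rw [h0]; positivity
    obtain ⟨g, hg⟩ := Finset.card_pos.mp hpos
    simp only [Finset.mem_filter, Finset.mem_univ, true_and] at hg
    have hle : below g (2 * n) ≤ 2 * n := below_le g (2 * n)
    obtain ⟨k, hk⟩ := hg.2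
    refine ⟨below g (2 * n), hg.2, by omega, by omega,
      (isRiffle_iff _ w).mpr ⟨g, rfl, hg.1⟩⟩

lemma w0_iff : w = w0 (2 * n) ↔
    (chE false (List.ofFn w) = true ∧ chO (List.ofFn w) = true) := by
  rw [chain_alt (List.ofFn w) false (by rw [ofFn_length]; exact even_two_mul n)]
  constructor
  · intro h
    subst h
    refine ⟨rfl, ?_⟩
    intro j hj
    rw [List.getElem_ofFn]
    show dOdd (j + 1) = !dOdd j
    exact dOdd_succ j
  · rintro ⟨_, h⟩
    funext j
    have hj' : (j : ℕ) < (List.ofFn w).length := by rw [ofFn_length]; exact j.isLt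
    have hth := h (j : ℕ) hj'
    rw [List.getElem_ofFn] at hth
    have hcast : (⟨(j : ℕ), by simpa using hj'⟩ : Fin (2 * n)) = j := by
      apply Fin.ext; rfl
    rw [hcast] at hth
    show w j = dOdd ((j : ℕ) + 1)
    rw [dOdd_succ]
    exact hth

end Assembly

/-- The number of `2`-shuffle words producing the color pattern `w` from the alternating
deck of `2n` cards: `2^n + 2^{n-1}` for `w = w_0`; `2^{n-1}` for `w ∈ O \ {w_0}`;
`2^n` for `w ∈ E \ {w_0}`; `0` otherwise. Dividing by `2^{2n}` gives `Q_2(w)`. -/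
theorem statement17 (n : ℕ) (hn : 1 ≤ n) (w : Fin (2 * n) → Bool) :
    (w = w0 (2 * n) →
      (Finset.univ.filter fun f : Fin (2 * n) → Fin 2 => wAlt f = w).card =
        2 ^ n + 2 ^ (n - 1)) ∧
    (memO n w → w ≠ w0 (2 * n) →
      (Finset.univ.filter fun f : Fin (2 * n) → Fin 2 => wAlt f = w).card = 2 ^ (n - 1)) ∧
    (memE n w → w ≠ w0 (2 * n) →
      (Finset.univ.filter fun f : Fin (2 * n) → Fin 2 => wAlt f = w).card = 2 ^ n) ∧
    (¬ memO n w → ¬ memE n w →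
      (Finset.univ.filter fun f : Fin (2 * n) → Fin 2 => wAlt f = w).card = 0) := by
  have htot := total_split w
  have hE := countE_eq w
  have hO := countO_eq w hn
  refine ⟨?_, ?_, ?_, ?_⟩
  · intro hw
    obtain ⟨hc1, hc2⟩ := (w0_iff w).mp hw
    rw [htot, hE, hO, if_pos hc1, if_pos hc2]
  · intro hmO hw
    have hc2 : chO (List.ofFn w) = true := (memO_iff w hn).mp hmO
    have hc1 : chE false (List.ofFn w) ≠ true := by
      intro hc1
      exact hw ((w0_iff w).mpr ⟨hc1, hc2⟩)
    rw [htot, hE, hO, if_neg hc1, if_pos hc2, Nat.zero_add]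
  · intro hmE hw
    have hc1 : chE false (List.ofFn w) = true := (memE_iff w).mp hmE
    have hc2 : chO (List.ofFn w) ≠ true := by
      intro hc2
      exact hw ((w0_iff w).mpr ⟨hc1, hc2⟩)
    rw [htot, hE, hO, if_pos hc1, if_neg hc2, Nat.add_zero]
  · intro hmO hmE
    have hc1 : chE false (List.ofFn w) ≠ true := fun hc => hmE ((memE_iff w).mpr hc)
    have hc2 : chO (List.ofFn w) ≠ true := fun hc => hmO ((memO_iff w hn).mpr hc)
    rw [htot, hE, hO, if_neg hc1, if_neg hc2]
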